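/- Let R be an odd integer with |R| ≥ 3, b ∈ ℝ \ {0}, and let μ be the unique probability measure with μ = (1/2)(μ∘σ₀^{-1} + μ∘σ_b^{-1}) where σ₀(x) = x/R, σ_b(x) = x/R + b. Then any set Γ ⊂ ℝ such that {e_γ : γ ∈ Γ} is orthogonal in L²(μ) has at most two elements. -/

import Mathlib

open MeasureTheory Complex Filter

noncomputable def phiF (μ : Measure ℝ) (t : ℝ) : ℂ :=
  ∫ x, Complex.exp ((((2 : ℝ) * Real.pi * (t * x) : ℝ) : ℂ) * Complex.I) ∂μ

lemma bdd_integrable (μ : Measure ℝ) [IsProbabilityMeasure μ] (g : ℝ → ℝ) (hg : Continuous g)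
    (hbd : ∀ x, |g x| ≤ 1) : Integrable g μ :=
  (integrable_const (1:ℝ)).mono' hg.aestronglyMeasurable (ae_of_all _ fun x => by
    simpa using hbd x)

lemma exp_int (μ : Measure ℝ) [IsProbabilityMeasure μ] (g : ℝ → ℝ) (hg : Continuous g) :
    ∫ x, Complex.exp ((g x : ℂ) * Complex.I) ∂μ =
      ↑(∫ x, Real.cos (g x) ∂μ) + ↑(∫ x, Real.sin (g x) ∂μ) * Complex.I := by
  have hc : Integrable (fun x => Real.cos (g x)) μ :=
    bdd_integrable μ _ (Real.continuous_cos.comp hg) fun x => Real.abs_cos_le_one _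
  have hs : Integrable (fun x => Real.sin (g x)) μ :=
    bdd_integrable μ _ (Real.continuous_sin.comp hg) fun x => Real.abs_sin_le_one _
  have h1 : (fun x => Complex.exp ((g x : ℂ) * Complex.I)) =
      fun x => ((Real.cos (g x) : ℂ)) + ((Real.sin (g x) : ℂ)) * Complex.I := by
    funext x
    rw [Complex.exp_mul_I, Complex.ofReal_cos, Complex.ofReal_sin]
  have hc' : Integrable (fun x => ((Real.cos (g x)) : ℂ)) μ := hc.ofReal (𝕜 := ℂ)
  have hs' : Integrable (fun x => ((Real.sin (g x)) : ℂ)) μ := hs.ofReal (𝕜 := ℂ)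
  rw [h1, integral_add hc' (hs'.mul_const Complex.I), integral_mul_const]
  congr 1
  · exact integral_ofReal
  · congr 1
    exact integral_ofReal

lemma func_eq (R : ℤ) (hRne : (R:ℝ) ≠ 0) (b : ℝ)
    (μ : Measure ℝ) [IsProbabilityMeasure μ]
    (hμ : ∀ f : ℝ → ℝ, Continuous f →
      ∫ x, f x ∂μ =
        (1 / 2) * ((∫ x, f (x / (R : ℝ)) ∂μ) + ∫ x, f (x / (R : ℝ) + b) ∂μ))
    (t : ℝ) :
    phiF μ t = (1/2 : ℂ) * (1 + Complex.exp ((((2:ℝ) * Real.pi * (t*b) : ℝ) : ℂ) * Complex.I)) *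
      phiF μ (t / R) := by
  have hg0 : Continuous (fun x : ℝ => 2 * Real.pi * (t * x)) := by fun_prop
  have hg1 : Continuous (fun x : ℝ => 2 * Real.pi * (t * (x / (R:ℝ)))) := by fun_prop
  have hg2 : Continuous (fun x : ℝ => 2 * Real.pi * (t * (x / (R:ℝ) + b))) := by fun_prop
  -- Step 1: φ t = (1/2) (∫ e^{2πi t (x/R)} + ∫ e^{2πi t (x/R + b)})
  have hcos := hμ (fun x => Real.cos (2 * Real.pi * (t * x))) (by fun_prop)
  have hsin := hμ (fun x => Real.sin (2 * Real.pi * (t * x))) (by fun_prop)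
  have e0 := exp_int μ _ hg0
  have e1 := exp_int μ _ hg1
  have e2 := exp_int μ _ hg2
  have step1 : phiF μ t =
      (1/2 : ℂ) * ((∫ x, Complex.exp ((((2:ℝ) * Real.pi * (t * (x / (R:ℝ))) : ℝ) : ℂ) * Complex.I) ∂μ)
        + ∫ x, Complex.exp ((((2:ℝ) * Real.pi * (t * (x / (R:ℝ) + b)) : ℝ) : ℂ) * Complex.I) ∂μ) := by
    rw [phiF, e0, e1, e2, hcos, hsin]
    push_cast
    ring
  -- Step 2: rewrite the two integrals
  have i1 : (∫ x, Complex.exp ((((2:ℝ) * Real.pi * (t * (x / (R:ℝ))) : ℝ) : ℂ) * Complex.I) ∂μ)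
      = phiF μ (t / R) := by
    rw [phiF]
    congr 1
    funext x
    congr 1
    push_cast
    ring
  have i2 : (∫ x, Complex.exp ((((2:ℝ) * Real.pi * (t * (x / (R:ℝ) + b)) : ℝ) : ℂ) * Complex.I) ∂μ)
      = Complex.exp ((((2:ℝ) * Real.pi * (t*b) : ℝ) : ℂ) * Complex.I) * phiF μ (t / R) := by
    rw [phiF, ← integral_const_mul]
    congr 1
    funext x
    rw [← Complex.exp_add]
    congr 1
    have harg : (2:ℝ) * Real.pi * (t * (x / (R:ℝ) + b)) =
        2 * Real.pi * (t*b) + 2 * Real.pi * (t / (R:ℝ) * x) := by ring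
    rw [harg]
    push_cast
    ring
  rw [step1, i1, i2]
  ring

lemma exp_real_eq_neg_one {θ : ℝ} (h : Complex.exp ((θ : ℂ) * Complex.I) = -1) :
    ∃ k : ℤ, θ = (2 * k + 1) * Real.pi := by
  have h2 : Complex.exp (((2 * θ : ℝ) : ℂ) * Complex.I) = 1 := by
    push_cast
    rw [two_mul, add_mul, Complex.exp_add, h]
    ring
  rw [Complex.exp_eq_one_iff] at h2
  obtain ⟨n, hn⟩ := h2
  have hθ : (θ : ℂ) = (n : ℂ) * Real.pi := by
    have hI : ((2 : ℂ) * θ) * Complex.I = ((n : ℂ) * (2 * Real.pi)) * Complex.I := by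
      push_cast at hn ⊢
      rw [hn]; ring
    have := mul_right_cancel₀ Complex.I_ne_zero hI
    linear_combination (1/2 : ℂ) * this
  have hθr : θ = (n : ℝ) * Real.pi := by exact_mod_cast hθ
  -- exp(θ I) = (-1)^n
  have hpow : Complex.exp ((θ : ℂ) * Complex.I) = (-1 : ℂ) ^ n := by
    rw [hθ]
    push_cast
    rw [mul_assoc, ← Complex.exp_pi_mul_I, ← Complex.exp_int_mul]
  rw [h] at hpow
  rcases Int.even_or_odd n with he | ho
  · exfalso
    obtain ⟨m, hm⟩ := he
    rw [hm] at hpow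
    have : ((-1 : ℂ)) ^ (m + m) = 1 := by
      rw [← two_mul, zpow_mul]
      norm_num
    rw [this] at hpow
    norm_num at hpow
  · obtain ⟨k, hk⟩ := ho
    exact ⟨k, by rw [hθr, hk]; push_cast; ring⟩

lemma phi_tendsto (R : ℤ) (hR : 3 ≤ |R|) (μ : Measure ℝ) [IsProbabilityMeasure μ] (t : ℝ) :
    Filter.Tendsto (fun n : ℕ => phiF μ (t / (R:ℝ)^n)) Filter.atTop (nhds 1) := by
  have hRabs : (1:ℝ) < |(R:ℝ)| := by
    rw [← Int.cast_abs]
    exact_mod_cast lt_of_lt_of_le (by norm_num) hR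
  have hRne : (R:ℝ) ≠ 0 := by
    intro h; rw [h] at hRabs; norm_num at hRabs
  have hlim : Filter.Tendsto (fun n : ℕ => t / (R:ℝ)^n) Filter.atTop (nhds 0) := by
    have hlt : |(R:ℝ)⁻¹| < 1 := by
      rw [abs_inv]
      exact inv_lt_one_of_one_lt₀ hRabs
    have := (tendsto_pow_atTop_nhds_zero_of_abs_lt_one hlt).const_mul t
    simpa [div_eq_mul_inv, inv_pow] using this
  have h1 : (1:ℂ) = ∫ _x, (1:ℂ) ∂μ := by simp
  rw [h1]
  apply tendsto_integral_of_dominated_convergence (fun _ => (1:ℝ))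
  · intro n
    exact (Continuous.aestronglyMeasurable (by fun_prop))
  · exact integrable_const 1
  · intro n
    refine ae_of_all _ fun x => ?_
    rw [Complex.norm_exp_ofReal_mul_I]
  · refine ae_of_all _ fun x => ?_
    have hcont : Continuous (fun s : ℝ => Complex.exp ((((2:ℝ) * Real.pi * (s * x) : ℝ) : ℂ) * Complex.I)) := by
      fun_prop
    have := (hcont.tendsto 0).comp hlim
    simpa [Function.comp_def] using this

lemma zero_struct (R : ℤ) (hR : 3 ≤ |R|) (b : ℝ)
    (μ : Measure ℝ) [IsProbabilityMeasure μ]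
    (hμ : ∀ f : ℝ → ℝ, Continuous f →
      ∫ x, f x ∂μ =
        (1 / 2) * ((∫ x, f (x / (R : ℝ)) ∂μ) + ∫ x, f (x / (R : ℝ) + b) ∂μ))
    (t : ℝ) (ht : phiF μ t = 0) :
    ∃ (m : ℕ) (k : ℤ), 2 * (t * b) = (R:ℝ)^m * (2*k+1) := by
  have hRne : (R:ℝ) ≠ 0 := by
    have : (3:ℝ) ≤ |(R:ℝ)| := by rw [← Int.cast_abs]; exact_mod_cast hR
    intro h; rw [h] at this; norm_num at this
  have hex : ∃ n : ℕ, phiF μ (t / (R:ℝ)^n) ≠ 0 :=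
    ((phi_tendsto R hR μ t).eventually_ne one_ne_zero).exists
  classical
  set N := Nat.find hex with hN
  have hNspec : phiF μ (t / (R:ℝ)^N) ≠ 0 := Nat.find_spec hex
  have hNpos : N ≠ 0 := by
    intro h0
    apply hNspec
    rw [h0]
    simpa using ht
  obtain ⟨m, hm⟩ : ∃ m, N = m + 1 := ⟨N - 1, (Nat.succ_pred_eq_of_pos (Nat.pos_of_ne_zero hNpos)).symm⟩
  have hmlt : m < N := by omega
  have hmzero : phiF μ (t / (R:ℝ)^m) = 0 := by
    by_contra hne
    have : N ≤ m := Nat.find_le hne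
    omega
  have hfe := func_eq R hRne b μ hμ (t / (R:ℝ)^m)
  have hdiv : t / (R:ℝ)^m / (R:ℝ) = t / (R:ℝ)^N := by
    rw [hm, pow_succ, div_div]
  rw [hdiv, hmzero] at hfe
  have hfac : (1 : ℂ) + Complex.exp ((((2:ℝ) * Real.pi * ((t / (R:ℝ)^m) * b) : ℝ) : ℂ) * Complex.I) = 0 := by
    rcases mul_eq_zero.mp hfe.symm with h | h
    · rcases mul_eq_zero.mp h with h' | h'
      · norm_num at h'
      · exact h'
    · exact absurd h hNspec
  have hexp : Complex.exp ((((2:ℝ) * Real.pi * ((t / (R:ℝ)^m) * b) : ℝ) : ℂ) * Complex.I) = -1 := by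
    linear_combination hfac
  obtain ⟨k, hk⟩ := exp_real_eq_neg_one hexp
  refine ⟨m, k, ?_⟩
  have hpi : Real.pi ≠ 0 := Real.pi_ne_zero
  have hpow : (R:ℝ)^m ≠ 0 := pow_ne_zero _ hRne
  field_simp at hk
  apply mul_left_cancel₀ hpi
  linear_combination Real.pi * hk


/-- For an odd scale `R` (`|R| ≥ 3`), any family of mutually orthogonal exponentials in
`L²(μ)` for the self-similar measure `μ = (1/2)(μ∘σ₀⁻¹ + μ∘σ_b⁻¹)` has at most two
elements. -/
theorem odd_scale_at_most_two_orthogonal (R : ℤ) (hodd : Odd R) (hR : 3 ≤ |R|)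
    (b : ℝ) (hb : b ≠ 0)
    (μ : Measure ℝ) [IsProbabilityMeasure μ]
    (hμ : ∀ f : ℝ → ℝ, Continuous f →
      ∫ x, f x ∂μ =
        (1 / 2) * ((∫ x, f (x / (R : ℝ)) ∂μ) + ∫ x, f (x / (R : ℝ) + b) ∂μ))
    (Γ : Set ℝ)
    (horth : ∀ γ₁ ∈ Γ, ∀ γ₂ ∈ Γ, γ₁ ≠ γ₂ →
      ∫ x, Complex.exp ((((2 : ℝ) * Real.pi * ((γ₂ - γ₁) * x) : ℝ) : ℂ) * Complex.I) ∂μ = 0) :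
    ∀ x ∈ Γ, ∀ y ∈ Γ, ∀ z ∈ Γ, x = y ∨ x = z ∨ y = z := by
  intro x hx y hy z hz
  by_contra hcon
  push_neg at hcon
  obtain ⟨hxy, hxz, hyz⟩ := hcon
  have h1 : phiF μ (y - x) = 0 := horth x hx y hy hxy
  have h2 : phiF μ (z - y) = 0 := horth y hy z hz hyz
  have h3 : phiF μ (z - x) = 0 := horth x hx z hz hxz
  obtain ⟨n1, k1, e1⟩ := zero_struct R hR b μ hμ _ h1
  obtain ⟨n2, k2, e2⟩ := zero_struct R hR b μ hμ _ h2
  obtain ⟨n3, k3, e3⟩ := zero_struct R hR b μ hμ _ h3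
  have hsum : (R:ℝ)^n3 * (2*(k3:ℝ)+1) = (R:ℝ)^n1 * (2*(k1:ℝ)+1) + (R:ℝ)^n2 * (2*(k2:ℝ)+1) := by
    rw [← e1, ← e2, ← e3]; ring
  have hint : (R^n3 * (2*k3+1) : ℤ) = R^n1 * (2*k1+1) + R^n2 * (2*k2+1) := by
    exact_mod_cast hsum
  have ho1 : Odd (R^n1 * (2*k1+1)) := (hodd.pow).mul (odd_two_mul_add_one k1)
  have ho2 : Odd (R^n2 * (2*k2+1)) := (hodd.pow).mul (odd_two_mul_add_one k2)
  have ho3 : Odd (R^n3 * (2*k3+1)) := (hodd.pow).mul (odd_two_mul_add_one k3)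
  rw [hint] at ho3
  exact (Int.not_odd_iff_even.mpr (ho1.add_odd ho2)) ho3
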